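/- Let x ∈ ℤⁿ and let y ∈ ℤⁿ with y₁ ≥ a be such that f₁(x) ≤ f₁(y); then f(x) ⪯ f(y). Similarly, let x ∈ ℤⁿ and let y ∈ ℤⁿ with y₁ ≤ −a be such that f₂(x) ≤ f₂(y); then f(x) ⪯ f(y). -/
import Mathlib


namespace EvoMO

/-- Search points: integer vectors of dimension `n`. -/
abbrev Pt (n : ℕ) := Fin n → ℤ

/-- The bi-objective benchmark function
`f(x) = (|x₁ − a| + Σ_{i≥2} |x_i|, |x₁ + a| + Σ_{i≥2} |x_i|)`. -/
def benchf (n a : ℕ) [NeZero n] (x : Pt n) : ℤ × ℤ :=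
  (|x 0 - (a : ℤ)| + ∑ i ∈ Finset.univ.erase (0 : Fin n), |x i|,
   |x 0 + (a : ℤ)| + ∑ i ∈ Finset.univ.erase (0 : Fin n), |x i|)

/-- Weak dominance (for minimization): `u ⪯ v`. -/
def dominates (u v : ℤ × ℤ) : Prop := u.1 ≤ v.1 ∧ u.2 ≤ v.2

/-- Strict dominance: `u ≺ v`. -/
def sdominates (u v : ℤ × ℤ) : Prop := dominates u v ∧ u ≠ v

/-- L1-norm of an integer vector. -/
def l1 {n : ℕ} (x : Pt n) : ℤ := ∑ i, |x i|

/-- The Pareto front `F*` of the benchmark function. -/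
def paretoFront (n a : ℕ) [NeZero n] : Set (ℤ × ℤ) :=
  {p | ∃ y : Pt n, benchf n a y = p ∧ ¬ ∃ x : Pt n, sdominates (benchf n a x) (benchf n a y)}

instance (u v : ℤ × ℤ) : Decidable (dominates u v) := by
  unfold dominates; infer_instance

instance (u v : ℤ × ℤ) : Decidable (sdominates u v) := by
  unfold sdominates; infer_instance

end EvoMO

open EvoMO in
/-- **Lemma 1.** If `y₁ ≥ a` and `f₁(x) ≤ f₁(y)`, then `f(x) ⪯ f(y)`; similarly, if
`y₁ ≤ −a` and `f₂(x) ≤ f₂(y)`, then `f(x) ⪯ f(y)`. -/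
theorem always_comparable_outside (n a : ℕ) [NeZero n] (hn : 2 ≤ n) (x y : Pt n) :
    ((a : ℤ) ≤ y 0 → (benchf n a x).1 ≤ (benchf n a y).1 →
      dominates (benchf n a x) (benchf n a y)) ∧
    (y 0 ≤ -(a : ℤ) → (benchf n a x).2 ≤ (benchf n a y).2 →
      dominates (benchf n a x) (benchf n a y)) := by
  simp only [benchf, dominates]
  constructor <;> intro h hle <;>
    refine ⟨?_, ?_⟩ <;>
    rcases abs_cases (x 0 - (a:ℤ)) with ⟨h1,h1'⟩|⟨h1,h1'⟩ <;>
    rcases abs_cases (x 0 + (a:ℤ)) with ⟨h2,h2'⟩|⟨h2,h2'⟩ <;>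
    rcases abs_cases (y 0 - (a:ℤ)) with ⟨h3,h3'⟩|⟨h3,h3'⟩ <;>
    rcases abs_cases (y 0 + (a:ℤ)) with ⟨h4,h4'⟩|⟨h4,h4'⟩ <;>
    omega
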